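/- Let X and Y be well-founded extensional APGs with carriers in Type u. Then X and Y are isomorphic as pointed graphs if and only if they have the same members: for every well-founded extensional APG Z with carrier in Type u, Z ⋲ X holds if and only if Z ⋲ Y holds. (This is the axiom of extensionality for the class of well-founded extensional APGs.) -/

import Mathlib

universe u

/-- An accessible pointed graph (APG): a type with a binary relation and a root from
which every node is reachable (backwards along `Relation.ReflTransGen`). -/
structure APG : Type (u + 1) where
  carrier : Type u
  rel : carrier → carrier → Prop
  pt : carrier
  acc : ∀ z : carrier, Relation.ReflTransGen rel z pt

/-- An APG is well-founded if its relation is. -/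
def APG.WF (X : APG.{u}) : Prop := WellFounded X.rel

/-- An APG is extensional if its relation is. -/
def APG.Ext (X : APG.{u}) : Prop :=
  ∀ x y : X.carrier, (∀ z, X.rel z x ↔ X.rel z y) → x = y

/-- Isomorphism of APGs: a relation isomorphism preserving the root. -/
def APG.Iso (X Y : APG.{u}) : Prop :=
  ∃ e : X.rel ≃r Y.rel, e X.pt = Y.pt

private theorem APG.slice_acc {α : Type u} (r : α → α → Prop) (y : α)
    (z : {w : α // Relation.ReflTransGen r w y}) :
    Relation.ReflTransGen (fun a b : {w : α // Relation.ReflTransGen r w y} => r a.1 b.1)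
      z ⟨y, Relation.ReflTransGen.refl⟩ := by
  obtain ⟨a, h⟩ := z
  induction h using Relation.ReflTransGen.head_induction_on with
  | refl => exact Relation.ReflTransGen.refl
  | head h' h ih => exact Relation.ReflTransGen.head h' ih

/-- The sub-APG of `Y` determined by a node `y`: the nodes admitting a path to `y`,
rooted at `y`. -/
def APG.slice (Y : APG.{u}) (y : Y.carrier) : APG.{u} where
  carrier := {z : Y.carrier // Relation.ReflTransGen Y.rel z y}
  rel a b := Y.rel a.1 b.1
  pt := ⟨y, Relation.ReflTransGen.refl⟩
  acc z := APG.slice_acc Y.rel y z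

/-- Membership of APGs: `X ⋲ Y` iff `X` is isomorphic to `Y.slice y` for some member
(child of the root) `y` of `Y`. -/
def APG.Mem (X Y : APG.{u}) : Prop :=
  ∃ y : Y.carrier, Y.rel y Y.pt ∧ APG.Iso X (Y.slice y)

section Clps
variable {α : Type u} {r : α → α → Prop}

/-- Mostowski collapse of a well-founded relation into `ZFSet`. -/
noncomputable def clps (hw : WellFounded r) : α → ZFSet.{u} :=
  hw.fix (fun x IH => ZFSet.range (fun z : {w // r w x} => IH z.1 z.2))

theorem mem_clps (hw : WellFounded r) {x : α} {z : ZFSet.{u}} :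
    z ∈ clps hw x ↔ ∃ w, r w x ∧ clps hw w = z := by
  have h : clps hw x = ZFSet.range (fun z : {w // r w x} => clps hw z.1) :=
    WellFounded.fix_eq hw _ x
  rw [h, ZFSet.mem_range]
  constructor
  · rintro ⟨⟨w, hw'⟩, rfl⟩
    exact ⟨w, hw', rfl⟩
  · rintro ⟨w, hw', rfl⟩
    exact ⟨⟨w, hw'⟩, rfl⟩

theorem clps_self_mem (hw : WellFounded r) {w x : α} (h : r w x) :
    clps hw w ∈ clps hw x :=
  (mem_clps hw).2 ⟨w, h, rfl⟩

theorem clps_injective (hw : WellFounded r)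
    (he : ∀ x y : α, (∀ z, r z x ↔ r z y) → x = y) :
    Function.Injective (clps hw) := by
  intro x
  induction x using hw.induction with
  | _ x IH =>
    intro y hxy
    apply he
    intro z
    constructor
    · intro hz
      have : clps hw z ∈ clps hw y := hxy ▸ clps_self_mem hw hz
      obtain ⟨w, hwy, hwz⟩ := (mem_clps hw).1 this
      exact (IH z hz hwz.symm) ▸ hwy
    · intro hz
      have : clps hw z ∈ clps hw x := hxy ▸ clps_self_mem hw hz
      obtain ⟨w, hwx, hwz⟩ := (mem_clps hw).1 this
      exact (IH w hwx hwz) ▸ hwx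

end Clps

theorem clps_eq_of_relIso {α β : Type u} {r : α → α → Prop} {s : β → β → Prop}
    (hr : WellFounded r) (hs : WellFounded s) (e : r ≃r s) (x : α) :
    clps hs (e x) = clps hr x := by
  induction x using hr.induction with
  | _ x IH =>
    apply ZFSet.ext
    intro z
    rw [mem_clps, mem_clps]
    constructor
    · rintro ⟨w, hw, rfl⟩
      refine ⟨e.symm w, ?_, ?_⟩
      · have := e.map_rel_iff (a := e.symm w) (b := x)
        rw [e.apply_symm_apply] at this
        exact this.1 hw
      · have hw' : r (e.symm w) x := by
          have := e.map_rel_iff (a := e.symm w) (b := x)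
          rw [e.apply_symm_apply] at this
          exact this.1 hw
        rw [← IH _ hw', e.apply_symm_apply]
    · rintro ⟨w, hw, rfl⟩
      exact ⟨e w, e.map_rel_iff.2 hw, IH w hw⟩

/-- Reconstruction: two WF extensional APGs with equal collapses of the roots are iso. -/
theorem iso_of_clps_eq (X Y : APG.{u}) (hXw : X.WF) (hXe : X.Ext)
    (hYw : Y.WF) (hYe : Y.Ext)
    (h : clps hXw X.pt = clps hYw Y.pt) : APG.Iso X Y := by
  have hXinj := clps_injective hXw hXe
  have hYinj := clps_injective hYw hYe
  have exY : ∀ x : X.carrier, ∃ y : Y.carrier, clps hXw x = clps hYw y := by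
    intro x
    induction X.acc x using Relation.ReflTransGen.head_induction_on with
    | refl => exact ⟨Y.pt, h⟩
    | head hab _ ih =>
      obtain ⟨y, hy⟩ := ih
      have : clps hXw _ ∈ clps hYw y := hy ▸ clps_self_mem hXw hab
      obtain ⟨w, _, hwz⟩ := (mem_clps hYw).1 this
      exact ⟨w, hwz.symm⟩
  have exX : ∀ y : Y.carrier, ∃ x : X.carrier, clps hYw y = clps hXw x := by
    intro y
    induction Y.acc y using Relation.ReflTransGen.head_induction_on with
    | refl => exact ⟨X.pt, h.symm⟩
    | head hab _ ih =>
      obtain ⟨x, hx⟩ := ih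
      have : clps hYw _ ∈ clps hXw x := hx ▸ clps_self_mem hYw hab
      obtain ⟨w, _, hwz⟩ := (mem_clps hXw).1 this
      exact ⟨w, hwz.symm⟩
  classical
  let f : X.carrier → Y.carrier := fun x => Classical.choose (exY x)
  have hf : ∀ x, clps hXw x = clps hYw (f x) := fun x => Classical.choose_spec (exY x)
  let g : Y.carrier → X.carrier := fun y => Classical.choose (exX y)
  have hg : ∀ y, clps hYw y = clps hXw (g y) := fun y => Classical.choose_spec (exX y)
  have gf : ∀ x, g (f x) = x := by
    intro x; apply hXinj; rw [← hg, ← hf]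
  have fg : ∀ y, f (g y) = y := by
    intro y; apply hYinj; rw [← hf, ← hg]
  refine ⟨⟨⟨f, g, gf, fg⟩, ?_⟩, ?_⟩
  · intro a b
    simp only [Equiv.coe_fn_mk]
    constructor
    · intro hfs
      have : clps hXw a ∈ clps hXw b := by
        rw [hf a, hf b]; exact clps_self_mem hYw hfs
      obtain ⟨w, hwb, hwz⟩ := (mem_clps hXw).1 this
      exact (hXinj hwz) ▸ hwb
    · intro hr
      have : clps hYw (f a) ∈ clps hYw (f b) := by
        rw [← hf a, ← hf b]; exact clps_self_mem hXw hr
      obtain ⟨w, hwb, hwz⟩ := (mem_clps hYw).1 this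
      exact (hYinj hwz) ▸ hwb
  · show f X.pt = Y.pt
    apply hYinj
    rw [← hf, h]

theorem slice_wf (Y : APG.{u}) (hYw : Y.WF) (y : Y.carrier) : (Y.slice y).WF :=
  InvImage.wf (fun a : (Y.slice y).carrier => a.1) hYw

theorem slice_ext (Y : APG.{u}) (hYe : Y.Ext) (y : Y.carrier) : (Y.slice y).Ext := by
  rintro ⟨a, ha⟩ ⟨b, hb⟩ hab
  apply Subtype.ext
  apply hYe
  intro z
  constructor
  · intro hz
    exact (hab ⟨z, Relation.ReflTransGen.head hz ha⟩).1 hz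
  · intro hz
    exact (hab ⟨z, Relation.ReflTransGen.head hz hb⟩).2 hz

theorem clps_slice (Y : APG.{u}) (hYw : Y.WF) (y : Y.carrier) :
    ∀ (z : Y.carrier) (h : Relation.ReflTransGen Y.rel z y),
      clps (slice_wf Y hYw y) (⟨z, h⟩ : (Y.slice y).carrier) = clps hYw z := by
  intro z
  induction z using hYw.induction with
  | _ z IH =>
    intro h
    apply ZFSet.ext
    intro w
    refine (mem_clps (slice_wf Y hYw y)).trans (Iff.trans ?_ (mem_clps hYw).symm)
    constructor
    · rintro ⟨⟨u, hu⟩, huz, rfl⟩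
      exact ⟨u, huz, (IH u huz hu).symm⟩
    · rintro ⟨u, huz, rfl⟩
      exact ⟨⟨u, Relation.ReflTransGen.head huz h⟩, huz, IH u huz _⟩

theorem mem_iff_clps_mem (Z X : APG.{u}) (hZw : Z.WF) (hZe : Z.Ext)
    (hXw : X.WF) (hXe : X.Ext) :
    APG.Mem Z X ↔ clps hZw Z.pt ∈ clps hXw X.pt := by
  constructor
  · rintro ⟨x, hx, e, he⟩
    have h1 : clps (slice_wf X hXw x) ((X.slice x).pt) = clps hZw Z.pt := by
      rw [← he]
      exact clps_eq_of_relIso hZw (slice_wf X hXw x) e Z.pt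
    have h2 : clps (slice_wf X hXw x) ((X.slice x).pt) = clps hXw x :=
      clps_slice X hXw x x Relation.ReflTransGen.refl
    have h3 : clps hZw Z.pt = clps hXw x := by rw [← h1, h2]
    rw [h3]
    exact clps_self_mem hXw hx
  · intro h
    obtain ⟨x, hx, hxz⟩ := (mem_clps hXw).1 h
    refine ⟨x, hx, ?_⟩
    apply iso_of_clps_eq Z (X.slice x) hZw hZe (slice_wf X hXw x) (slice_ext X hXe x)
    exact ((clps_slice X hXw x x Relation.ReflTransGen.refl).trans hxz).symm

theorem apg_extensionality (X Y : APG.{u}) (hXw : X.WF) (hXe : X.Ext)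
    (hYw : Y.WF) (hYe : Y.Ext) :
    APG.Iso X Y ↔ ∀ Z : APG.{u}, Z.WF → Z.Ext → (APG.Mem Z X ↔ APG.Mem Z Y) := by
  constructor
  · rintro ⟨e, he⟩ Z hZw hZe
    rw [mem_iff_clps_mem Z X hZw hZe hXw hXe, mem_iff_clps_mem Z Y hZw hZe hYw hYe]
    have : clps hYw Y.pt = clps hXw X.pt := by
      rw [← he]; exact clps_eq_of_relIso hXw hYw e X.pt
    rw [this]
  · intro hm
    apply iso_of_clps_eq X Y hXw hXe hYw hYe
    apply ZFSet.ext
    intro z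
    rw [mem_clps hXw, mem_clps hYw]
    constructor
    · rintro ⟨x, hx, rfl⟩
      have hmem : APG.Mem (X.slice x) X := by
        refine ⟨x, hx, RelIso.refl _, rfl⟩
      have := (hm (X.slice x) (slice_wf X hXw x) (slice_ext X hXe x)).1 hmem
      rw [mem_iff_clps_mem (X.slice x) Y (slice_wf X hXw x) (slice_ext X hXe x) hYw hYe] at this
      have hcs : clps (slice_wf X hXw x) (X.slice x).pt = clps hXw x :=
        clps_slice X hXw x x Relation.ReflTransGen.refl
      rw [hcs] at this
      exact (mem_clps hYw).1 this
    · rintro ⟨y, hy, rfl⟩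
      have hmem : APG.Mem (Y.slice y) Y := ⟨y, hy, RelIso.refl _, rfl⟩
      have := (hm (Y.slice y) (slice_wf Y hYw y) (slice_ext Y hYe y)).2 hmem
      rw [mem_iff_clps_mem (Y.slice y) X (slice_wf Y hYw y) (slice_ext Y hYe y) hXw hXe] at this
      have hcs : clps (slice_wf Y hYw y) (Y.slice y).pt = clps hYw y :=
        clps_slice Y hYw y y Relation.ReflTransGen.refl
      rw [hcs] at this
      exact (mem_clps hXw).1 this
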